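/- Let n ≥ 1 be a natural number and let ψ : (Fin n → Fin 2) → ℝ be any function (estimator). Then ∫_0^1 Σ_{x : Fin n → Fin 2} w^{|x|} (1−w)^{n−|x|} · |w − ψ(x)| dw ≥ 1 / ( 8·(2 + √(π n / 2)) ), where |x| denotes the number of coordinates of x equal to 1. -/

import Mathlib

set_option maxHeartbeats 1000000

section
open Real Filter Stirling Topology

lemma sqrt_pi_le_stirling (n : ℕ) : √π ≤ stirlingSeq (n+1) := by
  have h : Tendsto (stirlingSeq ∘ Nat.succ) atTop (𝓝 (√π)) :=
    tendsto_stirlingSeq_sqrt_pi.comp (tendsto_add_atTop_nat 1)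
  exact stirlingSeq'_antitone.le_of_tendsto h n

end

section
open Real Filter Stirling Topology Nat

lemma fact_eq_stirling (m : ℕ) (hm : 1 ≤ m) :
    (m ! : ℝ) = stirlingSeq m * (√(2*m) * ((m : ℝ)/exp 1)^m) := by
  have hm' : (0:ℝ) < m := by exact_mod_cast hm
  have h : (0:ℝ) < √(2*m) * ((m : ℝ)/exp 1)^m := by positivity
  rw [stirlingSeq, div_mul_cancel₀]
  positivity

lemma B2 (k m : ℕ) (hk : 1 ≤ k) (hm : 1 ≤ m) :
    ((k+m).choose k : ℝ) * k^k * m^m ≤ √((k+m)/(2*π*k*m)) * (k+m)^(k+m) := by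
  have hkR : (0:ℝ) < k := by exact_mod_cast hk
  have hmR : (0:ℝ) < m := by exact_mod_cast hm
  have hfk := fact_eq_stirling k hk
  have hfm := fact_eq_stirling m hm
  have hfkm := fact_eq_stirling (k+m) (le_trans hk (Nat.le_add_right _ _))
  have hsk : 0 < stirlingSeq k := by
    obtain ⟨k, rfl⟩ := Nat.exists_eq_add_of_le hk; rw [Nat.add_comm]; exact stirlingSeq'_pos k
  have hsm : 0 < stirlingSeq m := by
    obtain ⟨m, rfl⟩ := Nat.exists_eq_add_of_le hm; rw [Nat.add_comm]; exact stirlingSeq'_pos m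
  have hskm_le : stirlingSeq (k+m) ≤ stirlingSeq k := by
    obtain ⟨k, rfl⟩ := Nat.exists_eq_add_of_le hk
    obtain ⟨m, rfl⟩ := Nat.exists_eq_add_of_le hm
    have : (1 + k) + (1 + m) = (k + m + 1) + 1 := by ring
    rw [this, Nat.add_comm 1 k]
    exact stirlingSeq'_antitone (by omega)
  have hpm : √π ≤ stirlingSeq m := by
    obtain ⟨m, rfl⟩ := Nat.exists_eq_add_of_le hm; rw [Nat.add_comm]; exact sqrt_pi_le_stirling m
  have hchoose : ((k+m).choose k : ℝ) = (k+m)! / (k ! * m !) := by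
    rw [Nat.cast_choose ℝ (Nat.le_add_right k m)]
    simp
  have hE : (0:ℝ) < exp 1 := exp_pos 1
  have hN : (0:ℝ) < (k:ℝ) + m := by positivity
  have step1 : ((k+m)! : ℝ) ≤ stirlingSeq k * (√(2*((k:ℝ)+m)) * (((k:ℝ)+m)/exp 1)^(k+m)) := by
    rw [hfkm]
    push_cast
    gcongr
  calc ((k+m).choose k : ℝ) * k^k * m^m
      = ((k+m)! : ℝ) * ((k:ℝ)^k * m^m) / ((k ! : ℝ) * m !) := by rw [hchoose]; ring
    _ ≤ (stirlingSeq k * (√(2*((k:ℝ)+m)) * (((k:ℝ)+m)/exp 1)^(k+m))) * ((k:ℝ)^k * m^m) / ((k ! : ℝ) * m !) := by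
        have hden : (0:ℝ) < (k ! : ℝ) * m ! := by positivity
        gcongr
    _ = √(2*((k:ℝ)+m)) / (√(2*(k:ℝ)) * √(2*(m:ℝ)) * stirlingSeq m) * ((k:ℝ)+m)^(k+m) := by
        rw [hfk, hfm, div_pow, div_pow, div_pow, pow_add]
        have h1 : (0:ℝ) < √(2*(k:ℝ)) := by positivity
        have h2 : (0:ℝ) < √(2*(m:ℝ)) := by positivity
        field_simp
        ring
    _ ≤ √(2*((k:ℝ)+m)) / (√(2*(k:ℝ)) * √(2*(m:ℝ)) * √π) * ((k:ℝ)+m)^(k+m) := by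
        have h1 : (0:ℝ) < √(2*(k:ℝ)) := by positivity
        have h2 : (0:ℝ) < √(2*(m:ℝ)) := by positivity
        have h3 : (0:ℝ) < √π := by positivity
        gcongr
    _ = √(((k:ℝ)+m)/(2*π*(k:ℝ)*m)) * ((k:ℝ)+m)^(k+m) := by
        rw [← sqrt_mul (by positivity : (0:ℝ) ≤ 2*(k:ℝ)) (2*(m:ℝ)),
          ← sqrt_mul (by positivity) π, ← sqrt_div (by positivity)]
        congr 2
        field_simp

end

section
open Real Filter Topology Finset intervalIntegral

lemma B3 (n : ℕ) : ∑ k ∈ Finset.Ico 1 n, (1:ℝ)/√((k:ℝ)*((n:ℝ)-k)) ≤ π := by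
  set g : ℕ → ℝ := fun k => (1:ℝ)/√((k:ℝ)*((n:ℝ)-k)) with hg
  have hg0 : ∀ k, 0 ≤ g k := fun k => by
    exact one_div_nonneg.2 (Real.sqrt_nonneg _)
  rcases lt_or_ge n 2 with h2 | hn2
  · interval_cases n
    · simp [Real.pi_nonneg]
    · simp [Real.pi_nonneg]
  -- n ≥ 2
  have hnR : (2:ℝ) ≤ n := by exact_mod_cast hn2
  set K := n / 2 with hK
  have hK1 : 1 ≤ K := by omega
  have h2K : 2 * K ≤ n := by omega
  have h2K' : n ≤ 2 * K + 1 := by omega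
  have hKR : (K:ℝ) ≤ (n:ℝ)/2 := by
    rw [le_div_iff₀ (by norm_num)]
    exact_mod_cast (by omega : K * 2 ≤ n)
  -- the half-sum bound
  set f : ℝ → ℝ := fun x => 1/√(x*((n:ℝ)-x)) with hf
  have hf0 : ∀ x, 0 ≤ f x := fun x => one_div_nonneg.2 (Real.sqrt_nonneg _)
  have hposOn : ∀ x : ℝ, 1 ≤ x → x ≤ (n:ℝ)/2 → 0 < x * ((n:ℝ)-x) := by
    intro x h1 h2
    have : x ≤ (n:ℝ) - 1 := by linarith
    have : (0:ℝ) < (n:ℝ) - x := by linarith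
    positivity
  have hcont : ∀ a b : ℝ, 1 ≤ a → b ≤ (n:ℝ)/2 → a ≤ b →
      IntervalIntegrable f MeasureTheory.volume a b := by
    intro a b ha hb hab
    apply ContinuousOn.intervalIntegrable
    rw [Set.uIcc_of_le hab]
    apply ContinuousOn.div continuousOn_const
    · exact ((continuous_id.mul (continuous_const.sub continuous_id)).sqrt).continuousOn
    · intro x hx
      have := hposOn x (le_trans ha hx.1) (le_trans hx.2 hb)
      exact (Real.sqrt_pos.2 this).ne'
  -- FTC on [1, n/2]
  have hderivF : ∀ x : ℝ, 1 ≤ x → x ≤ (n:ℝ)/2 →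
      HasDerivAt (fun y : ℝ => arcsin ((2*y - n)/n)) (f x) x := by
    intro x h1 h2
    have hn0 : (0:ℝ) < n := by linarith
    have hy1 : (2*x - (n:ℝ))/n ≠ -1 := by
      intro h; rw [div_eq_iff hn0.ne'] at h; nlinarith
    have hy2 : (2*x - (n:ℝ))/n ≠ 1 := by
      intro h; rw [div_eq_iff hn0.ne'] at h; nlinarith
    have hga : HasDerivAt (fun y : ℝ => (2*y - (n:ℝ))/n) (2/n) x := by
      have h := (((hasDerivAt_id x).const_mul (2:ℝ)).sub_const (n:ℝ)).div_const (n:ℝ)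
      simpa using h
    have harc := (Real.hasDerivAt_arcsin hy1 hy2).comp x hga
    refine harc.congr_deriv (Eq.symm ?_)
    have hpos := hposOn x h1 h2
    have hs : (0:ℝ) < √(x*((n:ℝ)-x)) := Real.sqrt_pos.2 hpos
    have harg : 1 - ((2*x - (n:ℝ))/n)^2 = (2/n)^2 * (x * ((n:ℝ)-x)) := by
      field_simp; ring
    show (1:ℝ)/√(x*((n:ℝ)-x)) = 1 / √(1 - ((2*x - (n:ℝ))/n)^2) * (2/n)
    rw [harg, Real.sqrt_mul (sq_nonneg _), Real.sqrt_sq (by positivity : (0:ℝ) ≤ 2/n)]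
    have hx0 : (0:ℝ) < x := by linarith
    have hnx : (0:ℝ) < (n:ℝ)-x := by nlinarith
    rw [one_div, one_div, mul_inv]
    field_simp
  have hftc : ∫ x in (1:ℝ)..((n:ℝ)/2), f x = arcsin (((n:ℝ)-2)/n) := by
    have h1n : (1:ℝ) ≤ (n:ℝ)/2 := by linarith
    have hn0 : (0:ℝ) < n := by linarith
    rw [intervalIntegral.integral_eq_sub_of_hasDerivAt
      (f := fun y : ℝ => arcsin ((2*y - n)/n)) (fun x hx => by
        rw [Set.uIcc_of_le h1n] at hx
        exact hderivF x hx.1 hx.2)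
      (hcont 1 ((n:ℝ)/2) le_rfl le_rfl h1n)]
    have e1 : (2*((n:ℝ)/2) - n)/n = 0 := by field_simp; ring
    have e2 : (2*(1:ℝ) - n)/n = -(((n:ℝ)-2)/n) := by field_simp; ring
    rw [e1, e2, Real.arcsin_neg, Real.arcsin_zero]
    ring
  set a : ℕ → ℝ := fun i => 1 + (i:ℝ) with ha
  -- monotone comparison on each [k-1, k], k = 2..K
  have hterm : ∀ i : ℕ, i < K - 1 → g (2+i) ≤ ∫ x in (a i)..(a (i+1)), f x := by
    intro i hi
    have hik : (2+i) ≤ K := by omega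
    have hkR2 : (2:ℝ)+(i:ℝ) ≤ (n:ℝ)/2 := by
      calc (2:ℝ)+(i:ℝ) = ((2+i:ℕ):ℝ) := by push_cast; ring
        _ ≤ (K:ℝ) := by exact_mod_cast hik
        _ ≤ (n:ℝ)/2 := hKR
    have hle : a i ≤ a (i+1) := by simp only [ha]; push_cast; linarith
    have hgval : g (2+i) = (1:ℝ)/√(((2:ℝ)+(i:ℝ))*((n:ℝ)-((2:ℝ)+(i:ℝ)))) := by
      simp only [hg]; push_cast; ring_nf
    have key : ∀ x ∈ Set.Icc (a i) (a (i+1)), g (2+i) ≤ f x := by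
      intro x hx
      obtain ⟨hx1, hx2⟩ := hx
      simp only [ha] at hx1 hx2
      push_cast at hx1 hx2
      have hx1' : (1:ℝ) ≤ x := by linarith
      have hxk : x ≤ (2:ℝ)+(i:ℝ) := by linarith
      have hxn2 : x ≤ (n:ℝ)/2 := le_trans hxk hkR2
      have hpx := hposOn x hx1' hxn2
      have hmono : x * ((n:ℝ)-x) ≤ ((2:ℝ)+(i:ℝ)) * ((n:ℝ)-((2:ℝ)+(i:ℝ))) := by
        nlinarith
      rw [hgval]
      show (1:ℝ)/√(((2:ℝ)+(i:ℝ))*((n:ℝ)-((2:ℝ)+(i:ℝ)))) ≤ 1/√(x*((n:ℝ)-x))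
      apply one_div_le_one_div_of_le (Real.sqrt_pos.2 hpx)
      exact Real.sqrt_le_sqrt hmono
    have hlen : a (i+1) - a i = 1 := by simp only [ha]; push_cast; ring
    calc g (2+i) = (a (i+1) - a i) * g (2+i) := by rw [hlen, one_mul]
      _ = ∫ _x in (a i)..(a (i+1)), g (2+i) := by
          simp only [intervalIntegral.integral_const, smul_eq_mul]
      _ ≤ ∫ x in (a i)..(a (i+1)), f x := by
          apply intervalIntegral.integral_mono_on hle intervalIntegrable_const
            (hcont _ _ (by simp only [ha]; push_cast; linarith)
              (by simp only [ha]; push_cast; linarith) hle) key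
  have hint_adj : ∀ i : ℕ, i < K - 1 → IntervalIntegrable f MeasureTheory.volume (a i) (a (i+1)) := by
    intro i hi
    have hik : ((i:ℝ)+1)+1 ≤ (K:ℝ) := by
      have : (i+2) ≤ K := by omega
      calc ((i:ℝ)+1)+1 = ((i+2:ℕ):ℝ) := by push_cast; ring
        _ ≤ (K:ℝ) := by exact_mod_cast this
    apply hcont
    · simp only [ha]; push_cast; linarith [Nat.cast_nonneg (α := ℝ) i]
    · simp only [ha]; push_cast; linarith [hKR]
    · simp only [ha]; push_cast; linarith
  have hsum_int : ∑ i ∈ Finset.range (K-1), ∫ x in (a i)..(a (i+1)), f x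
      = ∫ x in (1:ℝ)..((K:ℝ)), f x := by
    have h := intervalIntegral.sum_integral_adjacent_intervals (μ := MeasureTheory.volume)
      (f := f) hint_adj
    have ha0 : a 0 = 1 := by simp [ha]
    have haK : a (K-1) = (K:ℝ) := by
      simp only [ha]
      push_cast [Nat.cast_sub hK1]
      ring
    rw [ha0, haK] at h
    exact h
  have half : ∑ k ∈ Finset.Icc 1 K, g k ≤ π / 2 := by
    have hpeel : ∑ k ∈ Finset.Icc 1 K, g k
        = g 1 + ∑ i ∈ Finset.range (K-1), g (2+i) := by
      rw [← Finset.Ico_add_one_right_eq_Icc, Finset.sum_Ico_eq_sum_range]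
      have hK' : K + 1 - 1 = (K-1) + 1 := by omega
      rw [hK', Finset.sum_range_succ']
      rw [add_comm]
      congr 1
      apply Finset.sum_congr rfl
      intro i _
      congr 1
      omega
    have hK1R : (1:ℝ) ≤ (K:ℝ) := by exact_mod_cast hK1
    have hint_le : ∫ x in (1:ℝ)..((K:ℝ)), f x ≤ ∫ x in (1:ℝ)..((n:ℝ)/2), f x := by
      rw [← intervalIntegral.integral_add_adjacent_intervals
        (hcont 1 (K:ℝ) le_rfl hKR hK1R) (hcont (K:ℝ) ((n:ℝ)/2) hK1R le_rfl hKR)]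
      have : 0 ≤ ∫ x in ((K:ℝ))..((n:ℝ)/2), f x :=
        intervalIntegral.integral_nonneg hKR (fun x _ => hf0 x)
      linarith
    have hsum_le : ∑ i ∈ Finset.range (K-1), g (2+i) ≤ arcsin (((n:ℝ)-2)/n) := by
      calc ∑ i ∈ Finset.range (K-1), g (2+i)
          ≤ ∑ i ∈ Finset.range (K-1), ∫ x in (a i)..(a (i+1)), f x :=
            Finset.sum_le_sum (fun i hi => hterm i (Finset.mem_range.1 hi))
        _ = ∫ x in (1:ℝ)..((K:ℝ)), f x := hsum_int
        _ ≤ ∫ x in (1:ℝ)..((n:ℝ)/2), f x := hint_le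
        _ = arcsin (((n:ℝ)-2)/n) := hftc
    -- final: g 1 + arcsin((n-2)/n) ≤ π/2
    have hn1 : (1:ℝ) ≤ (n:ℝ) - 1 := by linarith
    have hn0 : (0:ℝ) < n := by linarith
    set t : ℝ := 1/√((n:ℝ)-1) with ht
    have hsq : 1 ≤ √((n:ℝ)-1) := by
      have h := Real.sqrt_le_sqrt hn1
      rwa [Real.sqrt_one] at h
    have hsqpos : (0:ℝ) < √((n:ℝ)-1) := by linarith
    have ht0 : 0 < t := by positivity
    have ht1 : t ≤ 1 := by
      rw [ht, div_le_one hsqpos]; exact hsq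
    have hg1 : g 1 = t := by
      rw [hg, ht]; norm_num
    have htsq : t^2 = 1/((n:ℝ)-1) := by
      rw [ht, div_pow, one_pow, Real.sq_sqrt (by linarith)]
    have hcost : 1 - 1/((n:ℝ)-1)/2 ≤ Real.cos t := by
      have h := Real.one_sub_sq_div_two_le_cos (x := t)
      rwa [htsq] at h
    have hhalf2 : 1/((n:ℝ)-1)/2 ≤ 2/(n:ℝ) := by
      rw [div_div, div_le_div_iff₀ (by linarith) hn0]
      nlinarith
    have hcos : ((n:ℝ)-2)/n ≤ Real.cos t := by
      rw [div_le_iff₀ hn0]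
      have h2 := mul_le_mul_of_nonneg_right
        (show 1 - 2/(n:ℝ) ≤ Real.cos t by linarith) hn0.le
      have h3 : (1 - 2/(n:ℝ))*n = n - 2 := by field_simp
      linarith [h2, h3.symm.le]
    have harc_le : arcsin (((n:ℝ)-2)/n) ≤ π/2 - t := by
      have h1 : arcsin (((n:ℝ)-2)/n) ≤ arcsin (Real.cos t) :=
        Real.monotone_arcsin hcos
      have h2 : arcsin (Real.cos t) = π/2 - t := by
        rw [← Real.sin_pi_div_two_sub]
        apply Real.arcsin_sin
        · nlinarith [Real.pi_gt_three]
        · linarith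
      linarith
    rw [hpeel, hg1]
    linarith
  -- symmetry
  have hsym : ∀ k ∈ Finset.Ico (K+1) n, g k = g (n - k) := by
    intro k hk
    simp only [Finset.mem_Ico] at hk
    have hkn : k ≤ n := hk.2.le
    have : ((n - k : ℕ) : ℝ) = (n:ℝ) - k := by
      push_cast [Nat.cast_sub hkn]; ring
    simp only [hg, this]
    have : (n:ℝ) - ((n:ℝ) - k) = (k:ℝ) := by ring
    rw [this, mul_comm]
  have hsplit : ∑ k ∈ Finset.Ico 1 n, g k
      = ∑ k ∈ Finset.Icc 1 K, g k + ∑ k ∈ Finset.Ico (K+1) n, g k := by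
    rw [← Finset.sum_Ico_consecutive g (by omega : 1 ≤ K+1) (by omega : K+1 ≤ n)]
    congr 1
  have himg : ∑ k ∈ Finset.Ico (K+1) n, g k ≤ ∑ k ∈ Finset.Icc 1 K, g k := by
    rw [Finset.sum_congr rfl hsym]
    rw [← Finset.sum_image (show ∀ x ∈ Finset.Ico (K+1) n, ∀ y ∈ Finset.Ico (K+1) n,
        n - x = n - y → x = y from by
      intro a ha b hb hab; simp only [Finset.mem_Ico] at ha hb; omega)]
    apply Finset.sum_le_sum_of_subset_of_nonneg
    · intro j hj
      simp only [Finset.mem_image, Finset.mem_Ico] at hj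
      obtain ⟨k, hk, rfl⟩ := hj
      simp only [Finset.mem_Icc]
      omega
    · intro j _ _; exact hg0 j
  calc ∑ k ∈ Finset.Ico 1 n, g k
      = ∑ k ∈ Finset.Icc 1 K, g k + ∑ k ∈ Finset.Ico (K+1) n, g k := hsplit
    _ ≤ π/2 + π/2 := add_le_add half (le_trans himg half)
    _ = π := by ring

end

section
open Real Filter Topology Finset

lemma Ssum (n : ℕ) (hn : 1 ≤ n) :
    ∑ k ∈ Finset.range (n+1), (n.choose k : ℝ) * ((k:ℝ)/n)^k * (((n-k:ℕ):ℝ)/n)^(n-k)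
      ≤ 2 + √(π*n/2) := by
  have hn0 : (0:ℝ) < n := by exact_mod_cast hn
  set T : ℕ → ℝ := fun k => (n.choose k : ℝ) * ((k:ℝ)/n)^k * (((n-k:ℕ):ℝ)/n)^(n-k) with hT
  have hmid : ∀ k ∈ Finset.Ico 1 n, T k ≤ √((n:ℝ)/(2*π)) * ((1:ℝ)/√((k:ℝ)*((n:ℝ)-k))) := by
    intro k hk
    simp only [Finset.mem_Ico] at hk
    obtain ⟨hk1, hkn⟩ := hk
    set m := n - k with hm
    have hm1 : 1 ≤ m := by omega
    have hkm : k + m = n := by omega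
    have hkR : (0:ℝ) < k := by exact_mod_cast hk1
    have hmR : (0:ℝ) < m := by exact_mod_cast hm1
    have hcast : ((m:ℕ):ℝ) = (n:ℝ) - k := by
      rw [hm, Nat.cast_sub hkn.le]
    have hB := B2 k m hk1 hm1
    rw [hkm] at hB
    have hkmR : ((k:ℝ)+m) = (n:ℝ) := by rw [hcast]; ring
    rw [hkmR] at hB
    -- divide by n^n
    have hTval : T k = ((n.choose k : ℝ) * k^k * m^m) / (n:ℝ)^n := by
      rw [hT]
      simp only
      rw [div_pow, div_pow, ← hkm, pow_add]
      field_simp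
      rw [Nat.add_sub_cancel_left]; ring
    rw [hTval]
    rw [div_le_iff₀ (by positivity)]
    have heq : √((n:ℝ)/(2*π)) * ((1:ℝ)/√((k:ℝ)*((n:ℝ)-k))) = √((n:ℝ)/(2*π*k*m)) := by
      rw [← hcast, one_div, ← Real.sqrt_inv, ← Real.sqrt_mul (by positivity)]
      congr 1
      ring
    rw [heq]
    exact hB
  have h0 : T 0 = 1 := by
    rw [hT]
    simp [div_self hn0.ne']
  have hnn : T n = 1 := by
    rw [hT]
    simp [div_self hn0.ne']
  have hsplit : ∑ k ∈ Finset.range (n+1), T k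
      = T 0 + ∑ k ∈ Finset.Ico 1 n, T k + T n := by
    rw [Finset.range_eq_Ico]
    rw [← Finset.sum_Ico_consecutive T (by omega : 0 ≤ 1) (by omega : 1 ≤ n+1)]
    rw [← Finset.sum_Ico_consecutive T (by omega : 1 ≤ n) (by omega : n ≤ n+1)]
    rw [show Finset.Ico 0 1 = {0} from rfl, show Finset.Ico n (n+1) = {n} from Nat.Ico_succ_singleton n]
    simp [add_assoc]
  have hmid_sum : ∑ k ∈ Finset.Ico 1 n, T k ≤ √(π*n/2) := by
    calc ∑ k ∈ Finset.Ico 1 n, T k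
        ≤ ∑ k ∈ Finset.Ico 1 n, √((n:ℝ)/(2*π)) * ((1:ℝ)/√((k:ℝ)*((n:ℝ)-k))) :=
          Finset.sum_le_sum hmid
      _ = √((n:ℝ)/(2*π)) * ∑ k ∈ Finset.Ico 1 n, (1:ℝ)/√((k:ℝ)*((n:ℝ)-k)) := by
          rw [Finset.mul_sum]
      _ ≤ √((n:ℝ)/(2*π)) * π := by
          apply mul_le_mul_of_nonneg_left (B3 n) (Real.sqrt_nonneg _)
      _ = √(π*n/2) := by
          rw [show π*(n:ℝ)/2 = (n:ℝ)/(2*π) * π^2 by field_simp]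
          rw [Real.sqrt_mul (by positivity) (π^2), Real.sqrt_sq Real.pi_nonneg]
  rw [hsplit, h0, hnn]
  linarith

end

section
open Real Finset

lemma val_eq_ite (v : Fin 2) : (v : ℕ) = if v = 1 then 1 else 0 := by
  fin_cases v <;> simp

lemma sum_count (n : ℕ) (x : Fin n → Fin 2) :
    ∑ i, ((x i : ℕ)) = (Finset.univ.filter fun i => x i = 1).card := by
  rw [Finset.card_filter]
  exact Finset.sum_congr rfl (fun i _ => val_eq_ite (x i))

lemma group_sum (n : ℕ) (g : ℕ → ℝ) :
    ∑ x : Fin n → Fin 2, g (∑ i, ((x i : ℕ)))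
      = ∑ k ∈ Finset.range (n+1), (n.choose k : ℝ) * g k := by
  have hbij : Function.Bijective (fun x : Fin n → Fin 2 =>
      (Finset.univ.filter fun i => x i = 1 : Finset (Fin n))) := by
    constructor
    · intro x y hxy
      funext i
      have h := Finset.ext_iff.1 hxy i
      simp only [Finset.mem_filter, Finset.mem_univ, true_and] at h
      exact (by decide : ∀ v w : Fin 2, (v = 1 ↔ w = 1) → v = w) _ _ h
    · intro s
      refine ⟨fun i => if i ∈ s then 1 else 0, ?_⟩
      ext i
      simp only [Finset.mem_filter, Finset.mem_univ, true_and]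
      by_cases h : i ∈ s <;> simp [h]
  calc ∑ x : Fin n → Fin 2, g (∑ i, ((x i : ℕ)))
      = ∑ x : Fin n → Fin 2, g ((Finset.univ.filter fun i => x i = 1).card) := by
        exact Finset.sum_congr rfl (fun x _ => by rw [sum_count])
    _ = ∑ s : Finset (Fin n), g s.card := Fintype.sum_bijective _ hbij _ _ (fun x => rfl)
    _ = ∑ s ∈ (Finset.univ : Finset (Fin n)).powerset, g s.card := by
        rw [Finset.powerset_univ]
    _ = ∑ k ∈ Finset.range (n+1), ∑ s ∈ Finset.powersetCard k (Finset.univ : Finset (Fin n)), g s.card := by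
        rw [Finset.sum_powerset]
        simp
    _ = ∑ k ∈ Finset.range (n+1), (n.choose k : ℝ) * g k := by
        apply Finset.sum_congr rfl
        intro k _
        rw [Finset.sum_congr rfl (fun s hs => by
          rw [(Finset.mem_powersetCard.1 hs).2])]
        rw [Finset.sum_const, nsmul_eq_mul, Finset.card_powersetCard]
        simp

end

section
open Real Finset

lemma pointwise_bound (n k : ℕ) (hkn : k ≤ n) (hn : 1 ≤ n) (w : ℝ)
    (hw0 : 0 ≤ w) (hw1 : w ≤ 1) :
    w^k * (1-w)^(n-k) ≤ ((k:ℝ)/n)^k * (((n-k:ℕ):ℝ)/n)^(n-k) := by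
  have hn0 : (0:ℝ) < n := by exact_mod_cast hn
  rcases Nat.eq_zero_or_pos k with rfl | hk1
  · simp only [pow_zero, one_mul, Nat.sub_zero, Nat.cast_zero, zero_div]
    rw [div_self hn0.ne', one_pow]
    exact pow_le_one₀ (by linarith) (by linarith)
  rcases eq_or_lt_of_le hkn with rfl | hkn'
  · simp only [Nat.sub_self, pow_zero, mul_one]
    rw [div_self hn0.ne', one_pow]
    exact pow_le_one₀ hw0 hw1
  -- interior case: AM-GM
  set a : ℝ := (k:ℝ)/n with ha
  set b : ℝ := ((n-k:ℕ):ℝ)/n with hb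
  have hcast : ((n-k:ℕ):ℝ) = (n:ℝ) - k := Nat.cast_sub hkn
  have hkR : (0:ℝ) < k := by exact_mod_cast hk1
  have hmR : (0:ℝ) < ((n-k:ℕ):ℝ) := by
    rw [hcast]
    have : (k:ℝ) < n := by exact_mod_cast hkn'
    linarith
  have ha0 : 0 < a := by rw [ha]; positivity
  have hb0 : 0 < b := by rw [hb]; positivity
  have hab : a + b = 1 := by
    rw [ha, hb, hcast]
    field_simp
    ring
  set p₁ : ℝ := w/a with hp₁
  set p₂ : ℝ := (1-w)/b with hp₂
  have hp₁0 : 0 ≤ p₁ := by positivity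
  have hp₂0 : 0 ≤ p₂ := by
    apply div_nonneg (by linarith) hb0.le
  have hgm := Real.geom_mean_le_arith_mean2_weighted ha0.le hb0.le hp₁0 hp₂0 hab
  have hrhs : a * p₁ + b * p₂ = 1 := by
    rw [hp₁, hp₂]
    field_simp
    ring
  rw [hrhs] at hgm
  -- raise to n-th power
  have h2 : (p₁ ^ a * p₂ ^ b)^(n:ℕ) ≤ 1 := by
    calc (p₁ ^ a * p₂ ^ b)^(n:ℕ) ≤ 1^(n:ℕ) := by
          apply pow_le_pow_left₀ (by positivity) hgm
      _ = 1 := one_pow n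
  have han : a * (n:ℝ) = (k:ℝ) := by rw [ha]; field_simp
  have hbn : b * (n:ℝ) = ((n-k:ℕ):ℝ) := by rw [hb]; field_simp
  have hexp : (p₁ ^ a * p₂ ^ b)^(n:ℕ) = p₁^(k:ℕ) * p₂^(n-k:ℕ) := by
    rw [mul_pow]
    rw [← Real.rpow_natCast (p₁ ^ a) n, ← Real.rpow_natCast (p₂ ^ b) n]
    rw [← Real.rpow_natCast p₁ k, ← Real.rpow_natCast p₂ (n-k)]
    rw [← Real.rpow_mul hp₁0, ← Real.rpow_mul hp₂0, han, hbn]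
  rw [hexp] at h2
  have haw : a * p₁ = w := by rw [hp₁]; field_simp
  have hbw : b * p₂ = 1 - w := by rw [hp₂]; field_simp
  calc w^k * (1-w)^(n-k) = (a*p₁)^k * (b*p₂)^(n-k) := by rw [haw, hbw]
    _ = (a^k * b^(n-k)) * (p₁^k * p₂^(n-k)) := by rw [mul_pow, mul_pow]; ring
    _ ≤ (a^k * b^(n-k)) * 1 := by
        apply mul_le_mul_of_nonneg_left h2 (by positivity)
    _ = ((k:ℝ)/n)^k * (((n-k:ℕ):ℝ)/n)^(n-k) := by rw [mul_one, ha, hb]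

end

section
open Real Finset MeasureTheory

/-- Maximal-leakage lower bound on the Bayesian risk of estimating the bias of a Bernoulli
random variable with uniform prior, under absolute-error loss:
the risk of any estimator is at least `1/(8(2 + √(πn/2)))`. -/
theorem bernoulli_bias_risk_ge_maximal_leakage
    (n : ℕ) (hn : 1 ≤ n) (ψ : (Fin n → Fin 2) → ℝ) :
    (1 : ℝ) / (8 * (2 + Real.sqrt (Real.pi * n / 2))) ≤
      ∫ w in (0 : ℝ)..1, ∑ x : Fin n → Fin 2,
        w ^ (∑ i, (x i).val) * (1 - w) ^ (n - ∑ i, (x i).val) * |w - ψ x| := by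
  set D : ℝ := 2 + √(π*n/2) with hD
  have hsq : 0 ≤ √(π*n/2) := Real.sqrt_nonneg _
  have hD2 : (2:ℝ) ≤ D := by rw [hD]; linarith
  have hD0 : (0:ℝ) < D := by linarith
  set ρ : ℝ := 1/(4*D) with hρ
  have hρ0 : (0:ℝ) < ρ := by rw [hρ]; positivity
  set kf : (Fin n → Fin 2) → ℕ := fun x => ∑ i, ((x i : ℕ)) with hkf
  set p : (Fin n → Fin 2) → ℝ → ℝ := fun x w => w^(kf x) * (1-w)^(n - kf x) with hp
  set M : (Fin n → Fin 2) → ℝ :=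
    fun x => ((kf x:ℝ)/n)^(kf x) * (((n - kf x:ℕ):ℝ)/n)^(n - kf x) with hM
  have hk_le : ∀ x, kf x ≤ n := by
    intro x
    calc kf x = ∑ i, ((x i : ℕ)) := rfl
      _ ≤ ∑ _i : Fin n, 1 := Finset.sum_le_sum (fun i _ => by omega)
      _ = n := by simp
  have hM0 : ∀ x, 0 ≤ M x := by
    intro x
    rw [hM]
    positivity
  have hsum1 : ∀ w : ℝ, ∑ x : Fin n → Fin 2, p x w = 1 := by
    intro w
    calc ∑ x : Fin n → Fin 2, p x w
        = ∑ k ∈ Finset.range (n+1), (n.choose k : ℝ) * (w^k * (1-w)^(n-k)) :=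
          group_sum n (fun k => w^k * (1-w)^(n-k))
      _ = ∑ k ∈ Finset.range (n+1), w^k * (1-w)^(n-k) * (n.choose k : ℝ) := by
          apply Finset.sum_congr rfl; intro k _; ring
      _ = (w + (1-w))^n := (add_pow w (1-w) n).symm
      _ = 1 := by norm_num
  have hMsum : ∑ x : Fin n → Fin 2, M x ≤ D := by
    have hgs := group_sum n (fun k => ((k:ℝ)/n)^k * (((n-k:ℕ):ℝ)/n)^(n-k))
    calc ∑ x : Fin n → Fin 2, M x
        = ∑ k ∈ Finset.range (n+1), (n.choose k : ℝ) * (((k:ℝ)/n)^k * (((n-k:ℕ):ℝ)/n)^(n-k)) := by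
          rw [hM, hkf]; exact hgs
      _ = ∑ k ∈ Finset.range (n+1), (n.choose k : ℝ) * ((k:ℝ)/n)^k * (((n-k:ℕ):ℝ)/n)^(n-k) := by
          apply Finset.sum_congr rfl; intro k _; ring
      _ ≤ D := Ssum n hn
  set I : Set ℝ := Set.Ioc (0:ℝ) 1 with hI
  have hIm : MeasurableSet I := measurableSet_Ioc
  have hvolI : (volume I).toReal = 1 := by
    rw [hI, Real.volume_Ioc]
    norm_num
  have hcont_p : ∀ x, Continuous (fun w : ℝ => p x w) := by
    intro x
    rw [hp]
    exact (continuous_pow _).comp continuous_id |>.mul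
      (((continuous_const.sub continuous_id).pow _))
  have hcont_f : ∀ x, Continuous (fun w : ℝ => p x w * |w - ψ x|) := by
    intro x
    exact (hcont_p x).mul ((continuous_id.sub continuous_const).abs)
  have hint_p : ∀ x, IntegrableOn (fun w => p x w) I volume := by
    intro x
    exact (hcont_p x).integrableOn_Ioc
  have hint_f : ∀ x, IntegrableOn (fun w => p x w * |w - ψ x|) I volume := by
    intro x
    exact (hcont_f x).integrableOn_Ioc
  have hp0 : ∀ x, ∀ w ∈ I, 0 ≤ p x w := by
    intro x w hw
    obtain ⟨hw0, hw1⟩ := hw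
    rw [hp]
    have h1 : (0:ℝ) ≤ w := hw0.le
    have h2 : (0:ℝ) ≤ 1 - w := by linarith
    positivity
  have hpM : ∀ x, ∀ w ∈ I, p x w ≤ M x := by
    intro x w hw
    exact pointwise_bound n (kf x) (hk_le x) hn w hw.1.le hw.2
  -- key per-x bound
  have key : ∀ x, ρ * (∫ w in I, p x w) - ρ * (M x * (2*ρ))
      ≤ ∫ w in I, p x w * |w - ψ x| := by
    intro x
    set A : Set ℝ := Set.Ioo (ψ x - ρ) (ψ x + ρ) with hA
    have hAm : MeasurableSet A := measurableSet_Ioo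
    have hvolA : volume A = ENNReal.ofReal (2*ρ) := by
      rw [hA, Real.volume_Ioo]
      congr 1
      ring
    have hsub : volume (I ∩ A) ≤ ENNReal.ofReal (2*ρ) := by
      rw [← hvolA]
      exact measure_mono Set.inter_subset_right
    have step1 : ∫ w in I ∩ A, p x w ≤ M x * (2*ρ) := by
      calc ∫ w in I ∩ A, p x w
          ≤ ∫ _w in I ∩ A, M x := by
            apply setIntegral_mono_on
              ((hint_p x).mono_set Set.inter_subset_left)
              (integrableOn_const (lt_of_le_of_lt hsub ENNReal.ofReal_lt_top).ne)
              (hIm.inter hAm)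
              (fun w hw => hpM x w hw.1)
        _ = (volume (I ∩ A)).toReal * M x := by rw [setIntegral_const, smul_eq_mul, measureReal_def]
        _ ≤ (2*ρ) * M x := by
            apply mul_le_mul_of_nonneg_right _ (hM0 x)
            exact ENNReal.toReal_le_of_le_ofReal (by positivity) hsub
        _ = M x * (2*ρ) := by ring
    have habs : ∀ w ∈ I \ A, ρ ≤ |w - ψ x| := by
      intro w hw
      obtain ⟨hwI, hwA⟩ := hw
      rw [hA, Set.mem_Ioo, not_and_or] at hwA
      rcases hwA with h | h
      · push_neg at h
        have : ρ ≤ ψ x - w := by linarith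
        calc ρ ≤ ψ x - w := this
          _ ≤ |ψ x - w| := le_abs_self _
          _ = |w - ψ x| := abs_sub_comm _ _
      · push_neg at h
        have : ρ ≤ w - ψ x := by linarith
        calc ρ ≤ w - ψ x := this
          _ ≤ |w - ψ x| := le_abs_self _
    have step2 : ρ * ∫ w in I \ A, p x w ≤ ∫ w in I, p x w * |w - ψ x| := by
      calc ρ * ∫ w in I \ A, p x w
          = ∫ w in I \ A, ρ * p x w := (MeasureTheory.integral_const_mul ρ _).symm
        _ ≤ ∫ w in I \ A, p x w * |w - ψ x| := by
            apply setIntegral_mono_on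
              (((hint_p x).mono_set Set.diff_subset).const_mul ρ)
              ((hint_f x).mono_set Set.diff_subset)
              (hIm.diff hAm)
              (fun w hw => ?_)
            have h1 := hp0 x w hw.1
            have h2 := habs w hw
            calc ρ * p x w ≤ |w - ψ x| * p x w :=
                mul_le_mul_of_nonneg_right h2 h1
              _ = p x w * |w - ψ x| := by ring
        _ ≤ ∫ w in I, p x w * |w - ψ x| := by
            apply setIntegral_mono_set (hint_f x)
            · filter_upwards [ae_restrict_mem hIm] with w hw
              exact mul_nonneg (hp0 x w hw) (abs_nonneg _)
            · exact HasSubset.Subset.eventuallyLE Set.diff_subset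
    have step3 : ∫ w in I, p x w = (∫ w in I \ A, p x w) + ∫ w in I ∩ A, p x w := by
      rw [← setIntegral_union (Set.disjoint_left.mpr fun w hw1 hw2 => hw1.2 hw2.2) (hIm.inter hAm)
        ((hint_p x).mono_set Set.diff_subset) ((hint_p x).mono_set Set.inter_subset_left)]
      rw [Set.diff_union_inter]
    have h3 : ρ * (∫ w in I, p x w)
        = ρ * (∫ w in I \ A, p x w) + ρ * ∫ w in I ∩ A, p x w := by
      linear_combination ρ * step3
    have hmul := mul_le_mul_of_nonneg_left step1 hρ0.le
    calc ρ * (∫ w in I, p x w) - ρ * (M x * (2*ρ))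
        ≤ ρ * (∫ w in I, p x w) - ρ * ∫ w in I ∩ A, p x w := sub_le_sub_left hmul _
      _ = ρ * ∫ w in I \ A, p x w := by linear_combination h3
      _ ≤ ∫ w in I, p x w * |w - ψ x| := step2
  -- sum over x
  have hsum_int : ∑ x : Fin n → Fin 2, ∫ w in I, p x w = 1 := by
    rw [← integral_finset_sum _ (fun x _ => hint_p x)]
    rw [setIntegral_congr_fun hIm (fun w _ => hsum1 w)]
    simp [hvolI, measureReal_def]
  have htotal : ∑ x : Fin n → Fin 2, (ρ * (∫ w in I, p x w) - ρ * (M x * (2*ρ)))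
      ≤ ∫ w in I, ∑ x : Fin n → Fin 2, p x w * |w - ψ x| := by
    rw [integral_finset_sum _ (fun x _ => hint_f x)]
    exact Finset.sum_le_sum (fun x _ => key x)
  have hLHS : ∑ x : Fin n → Fin 2, (ρ * (∫ w in I, p x w) - ρ * (M x * (2*ρ)))
      = ρ - 2*ρ^2 * ∑ x : Fin n → Fin 2, M x := by
    rw [Finset.sum_sub_distrib, ← Finset.mul_sum, hsum_int, mul_one]
    congr 1
    rw [Finset.sum_congr rfl (fun x _ => show ρ * (M x * (2*ρ)) = 2*ρ^2 * M x from by ring)]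
    rw [← Finset.mul_sum]
  have hfinal : (1:ℝ)/(8*D) ≤ ∫ w in I, ∑ x : Fin n → Fin 2, p x w * |w - ψ x| := by
    calc (1:ℝ)/(8*D) = ρ - 2*ρ^2*D := by
          rw [hρ]; field_simp; ring
      _ ≤ ρ - 2*ρ^2 * ∑ x : Fin n → Fin 2, M x := by
          have := mul_le_mul_of_nonneg_left hMsum (show (0:ℝ) ≤ 2*ρ^2 by positivity)
          linarith
      _ = ∑ x : Fin n → Fin 2, (ρ * (∫ w in I, p x w) - ρ * (M x * (2*ρ))) := hLHS.symm
      _ ≤ ∫ w in I, ∑ x : Fin n → Fin 2, p x w * |w - ψ x| := htotal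
  rw [intervalIntegral.integral_of_le zero_le_one]
  exact hfinal

end
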